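/- arXiv:2209.13034 — 4 statements merged into one kernel-verified Lean document; each statement's English description precedes it below -/
import Mathlib

section
/- Let G=(V,E) be a hypergraph, let e_0 ∈ E, let T be a finite index set of distinct edges e_k ∈ E \ {e_0} (k ∈ T) adjacent to e_0, and let i ∈ T be such that (e_0 ∩ e_i) \ ∪_{j∈T\{i}} (e_0 ∩ e_j) = ∅. If a point z ∈ ℝ^{V∪E} satisfies z_{e_i} ≤ 1 and the extended flower inequality centered at e_0 with neighbors e_k, k ∈ T \ {i}, then z satisfies the extended flower inequality centered at e_0 with neighbors e_k, k ∈ T. -/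
open Finset

/-- A hypergraph: a finite set of nodes together with a set of edges,
each a subset of the nodes of cardinality at least two. -/
structure FinHypergraph (α : Type*) [DecidableEq α] where
  V : Finset α
  E : Finset (Finset α)
  edge_sub : ∀ e ∈ E, e ⊆ V
  edge_card : ∀ e ∈ E, 2 ≤ e.card

section Defs

variable {α : Type*} [DecidableEq α]

/-- Membership in the multilinear set `S_G`; a point is encoded as a single function
`z : Finset α → ℝ`, with node variables `z {v}` and edge variables `z e`. -/
def MultilinearSet (G : FinHypergraph α) (z : Finset α → ℝ) : Prop :=
  (∀ v ∈ G.V, z {v} = 0 ∨ z {v} = 1) ∧ ∀ e ∈ G.E, z e = ∏ v ∈ e, z {v}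

/-- Membership in the standard linearization `MP^LP_G`. -/
def StdLin (G : FinHypergraph α) (z : Finset α → ℝ) : Prop :=
  (∀ v ∈ G.V, z {v} ≤ 1) ∧
    ∀ e ∈ G.E, 0 ≤ z e ∧ (∑ v ∈ e, z {v}) - (e.card : ℝ) + 1 ≤ z e ∧ ∀ v ∈ e, z e ≤ z {v}

/-- The (extended) flower inequality centered at `e₀` with set of neighbors `T`. -/
def ExtFlowerIneq (z : Finset α → ℝ) (e₀ : Finset α) (T : Finset (Finset α)) : Prop :=
  (∑ v ∈ e₀ \ T.biUnion id, z {v}) + (∑ e ∈ T, z e) - z e₀ ≤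
    ((e₀ \ T.biUnion id).card : ℝ) + (T.card : ℝ) - 1

/-- `T` is a valid set of neighbors for an extended flower inequality centered at `e₀`:
a nonempty set of edges, distinct from `e₀`, adjacent to `e₀`, with `γ_i ≥ 2` for all `i ∈ T`. -/
def ValidEFNeighbors (G : FinHypergraph α) (e₀ : Finset α) (T : Finset (Finset α)) : Prop :=
  T.Nonempty ∧ (∀ e ∈ T, e ∈ G.E ∧ e ≠ e₀ ∧ (e ∩ e₀).Nonempty) ∧
    ∀ i ∈ T, 2 ≤ ((e₀ ∩ i) \ (T.erase i).biUnion (fun j => e₀ ∩ j)).card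

/-- Membership in the extended flower relaxation `MP^EF_G`. -/
def MPEF (G : FinHypergraph α) (z : Finset α → ℝ) : Prop :=
  StdLin G z ∧ ∀ e₀ ∈ G.E, ∀ T : Finset (Finset α), ValidEFNeighbors G e₀ T → ExtFlowerIneq z e₀ T

/-- `T` is a valid set of neighbors for a flower inequality centered at `e₀`. -/
def ValidFlowerNeighbors (G : FinHypergraph α) (e₀ : Finset α) (T : Finset (Finset α)) : Prop :=
  T.Nonempty ∧ (∀ e ∈ T, e ∈ G.E ∧ e ≠ e₀ ∧ 2 ≤ (e₀ ∩ e).card) ∧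
    ∀ i ∈ T, ∀ j ∈ T, i ≠ j → e₀ ∩ i ∩ j = ∅

/-- Membership in the flower relaxation `MP^F_G`. -/
def MPF (G : FinHypergraph α) (z : Finset α → ℝ) : Prop :=
  StdLin G z ∧ ∀ e₀ ∈ G.E, ∀ T : Finset (Finset α), ValidFlowerNeighbors G e₀ T → ExtFlowerIneq z e₀ T

/-- A recursive McCormick relaxation (RMC) of the multilinear set `S_G`:
a set `Ebar` of artificial edges together with, for each `f ∈ E ∪ Ebar`,
a partition `f = J f ∪ K f` into two disjoint nonempty parts, each a singleton
or an element of `E ∪ Ebar`, such that every artificial edge is reachable from some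
edge of `E` by iteratively passing to non-singleton parts. -/
structure RMC {α : Type*} [DecidableEq α] (G : FinHypergraph α) where
  Ebar : Finset (Finset α)
  ebar_sub : ∀ f ∈ Ebar, f ⊆ G.V
  ebar_card : ∀ f ∈ Ebar, 2 ≤ f.card
  ebar_new : ∀ f ∈ Ebar, f ∉ G.E
  J : Finset α → Finset α
  K : Finset α → Finset α
  union_eq : ∀ f ∈ G.E ∪ Ebar, J f ∪ K f = f
  disj : ∀ f ∈ G.E ∪ Ebar, Disjoint (J f) (K f)
  J_ne : ∀ f ∈ G.E ∪ Ebar, (J f).Nonempty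
  K_ne : ∀ f ∈ G.E ∪ Ebar, (K f).Nonempty
  J_mem : ∀ f ∈ G.E ∪ Ebar, (J f).card = 1 ∨ J f ∈ G.E ∪ Ebar
  K_mem : ∀ f ∈ G.E ∪ Ebar, (K f).card = 1 ∨ K f ∈ G.E ∪ Ebar
  reach : ∀ f ∈ Ebar, ∃ e ∈ G.E, Relation.ReflTransGen
    (fun a b => a ∈ G.E ∪ Ebar ∧ 2 ≤ b.card ∧ (b = J a ∨ b = K a)) e f

/-- One step of the recursive decomposition: passing from `a` to a non-singleton part of it. -/
def RMC.step {α : Type*} [DecidableEq α] {G : FinHypergraph α} (M : RMC G) (a b : Finset α) : Prop :=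
  a ∈ G.E ∪ M.Ebar ∧ 2 ≤ b.card ∧ (b = M.J a ∨ b = M.K a)

/-- The recursive sequence `R_e` of `e`: all sets obtained from `e` by iteratively
passing to non-singleton parts of the partitions (with `e ∈ R_e`). -/
def RMC.Rseq {α : Type*} [DecidableEq α] {G : FinHypergraph α} (M : RMC G) (e : Finset α) :
    Set (Finset α) :=
  {f | Relation.ReflTransGen M.step e f}

/-- The RMC is non-overlapping if the recursive sequences of distinct edges are disjoint. -/
def RMC.NonOverlapping {α : Type*} [DecidableEq α] {G : FinHypergraph α} (M : RMC G) : Prop :=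
  ∀ e ∈ G.E, ∀ e' ∈ G.E, e ≠ e' → M.Rseq e ∩ M.Rseq e' = ∅

/-- The point `w` (including artificial coordinates) satisfies all McCormick
inequalities of the RMC. -/
def RMC.McCormick {α : Type*} [DecidableEq α] {G : FinHypergraph α} (M : RMC G)
    (w : Finset α → ℝ) : Prop :=
  ∀ f ∈ G.E ∪ M.Ebar,
    0 ≤ w f ∧ w (M.J f) + w (M.K f) - 1 ≤ w f ∧ w f ≤ w (M.J f) ∧ w f ≤ w (M.K f)

/-- Membership in `MP^RMC_G`, the projection of the RMC polytope onto the coordinates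
indexed by `V ∪ E`: the point `z` admits an extension to the artificial variables
satisfying all McCormick inequalities of the RMC. -/
def RMC.MPRMC {α : Type*} [DecidableEq α] {G : FinHypergraph α} (M : RMC G)
    (z : Finset α → ℝ) : Prop :=
  ∃ w : Finset α → ℝ, (∀ v ∈ G.V, w {v} = z {v}) ∧ (∀ e ∈ G.E, w e = z e) ∧ M.McCormick w

/-- A flower partition `Te` of the edge `e`: a partition of `e` into pairwise disjoint
nonempty parts, each a singleton subset of `e` or an element of `R_e`, such that every
part lying in `Ebar` belongs to the recursive sequence of some other original edge. -/
def RMC.FlowerPartition {α : Type*} [DecidableEq α] {G : FinHypergraph α} (M : RMC G)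
    (e : Finset α) (Te : Finset (Finset α)) : Prop :=
  (∀ p ∈ Te, p.Nonempty) ∧
  (∀ p ∈ Te, ∀ q ∈ Te, p ≠ q → Disjoint p q) ∧
  Te.biUnion id = e ∧
  (∀ p ∈ Te, (p.card = 1 ∧ p ⊆ e) ∨ p ∈ M.Rseq e) ∧
  ∀ p ∈ Te, p ∈ M.Ebar → ∃ e' ∈ G.E, e' ≠ e ∧ p ∈ M.Rseq e'

/-- The McCormick system for the bilinear equation `w = u * v` over the unit hypercube. -/
def McSys (u v w : ℝ) : Prop := 0 ≤ w ∧ u + v - 1 ≤ w ∧ w ≤ u ∧ w ≤ v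

end Defs


/-- if `γ_i = 0` for some `i ∈ T`, then the extended flower inequality with
neighbors `T` is implied by `z_{e_i} ≤ 1` together with the extended flower inequality with
neighbors `T \ {i}`. -/
theorem extended_flower_gamma_zero {α : Type*} [DecidableEq α]
    (G : FinHypergraph α) (e₀ : Finset α) (he₀ : e₀ ∈ G.E)
    (T : Finset (Finset α))
    (hTE : ∀ e ∈ T, e ∈ G.E ∧ e ≠ e₀)
    (hadj : ∀ e ∈ T, (e ∩ e₀).Nonempty)
    (i : Finset α) (hi : i ∈ T)
    (hγ : (e₀ ∩ i) \ (T.erase i).biUnion (fun j => e₀ ∩ j) = ∅)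
    (z : Finset α → ℝ) (hzi : z i ≤ 1)
    (hEF : ExtFlowerIneq z e₀ (T.erase i)) :
    ExtFlowerIneq z e₀ T := by
  unfold ExtFlowerIneq at *
  have hset : e₀ \ T.biUnion id = e₀ \ (T.erase i).biUnion id := by
    apply Finset.Subset.antisymm
    · exact Finset.sdiff_subset_sdiff le_rfl
        (Finset.biUnion_subset_biUnion_of_subset_left _ (Finset.erase_subset i T))
    · intro v hv
      simp only [Finset.mem_sdiff, Finset.mem_biUnion, id] at hv ⊢
      refine ⟨hv.1, ?_⟩
      rintro ⟨j, hj, hvj⟩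
      rcases eq_or_ne j i with rfl | hne
      · have hvmem : v ∈ (e₀ ∩ j) \ (T.erase j).biUnion (fun k => e₀ ∩ k) := by
          simp only [Finset.mem_sdiff, Finset.mem_inter, Finset.mem_biUnion]
          refine ⟨⟨hv.1, hvj⟩, ?_⟩
          rintro ⟨k, hk, hvk⟩
          exact hv.2 ⟨k, hk, hvk.2⟩
        rw [hγ] at hvmem
        exact absurd hvmem (Finset.notMem_empty v)
      · exact hv.2 ⟨j, Finset.mem_erase.mpr ⟨hne, hj⟩, hvj⟩
  have hsum : ∑ e ∈ T, z e = z i + ∑ e ∈ T.erase i, z e := by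
    rw [Finset.add_sum_erase _ _ hi]
  have hcard : (T.card : ℝ) = (T.erase i).card + 1 := by
    rw [Finset.card_erase_of_mem hi]
    have : 1 ≤ T.card := Finset.card_pos.mpr ⟨i, hi⟩
    push_cast [Nat.cast_sub this]
    ring
  rw [hset, hsum, hcard]
  linarith
end

section
/- Let G=(V,E) be a hypergraph, let z̄ ∈ [0,1]^{V∪E}, and let e_0 ∈ E. Let E_{e_0} ⊆ E \ {e_0} be a set that, for every f ⊆ e_0 with |f| ≥ 2 such that some edge e ∈ E \ {e_0} satisfies e ∩ e_0 = f, contains exactly one edge e with e ∩ e_0 = f maximizing z̄_e among all such edges. If z̄ violates some extended flower inequality centered at e_0, then z̄ violates some extended flower inequality centered at e_0 all of whose neighbors belong to E_{e_0}. -/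
open Finset

/-- for separation over extended flower inequalities centered at `e₀`, it
suffices to consider neighbors from the set `Ee₀` keeping, for each intersection pattern
`f ⊆ e₀` with `|f| ≥ 2`, only one edge maximizing `z̄_e`. -/
theorem extended_flower_separation_restriction {α : Type*} [DecidableEq α]
    (G : FinHypergraph α) (z : Finset α → ℝ)
    (hz : (∀ v ∈ G.V, 0 ≤ z {v} ∧ z {v} ≤ 1) ∧ ∀ e ∈ G.E, 0 ≤ z e ∧ z e ≤ 1)
    (e₀ : Finset α) (he₀ : e₀ ∈ G.E)
    (Ee₀ : Finset (Finset α))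
    (hsub : ∀ e ∈ Ee₀, e ∈ G.E ∧ e ≠ e₀)
    (hexists : ∀ f : Finset α, f ⊆ e₀ → 2 ≤ f.card →
      (∃ e ∈ G.E, e ≠ e₀ ∧ e ∩ e₀ = f) → ∃ e ∈ Ee₀, e ∩ e₀ = f)
    (huniq : ∀ e ∈ Ee₀, ∀ e' ∈ Ee₀, e ∩ e₀ = e' ∩ e₀ → e = e')
    (hmax : ∀ e ∈ Ee₀, ∀ e' ∈ G.E, e' ≠ e₀ → e' ∩ e₀ = e ∩ e₀ → z e' ≤ z e)
    (hviol : ∃ T : Finset (Finset α), ValidEFNeighbors G e₀ T ∧ ¬ ExtFlowerIneq z e₀ T) :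
    ∃ T : Finset (Finset α), ValidEFNeighbors G e₀ T ∧ T ⊆ Ee₀ ∧
      ¬ ExtFlowerIneq z e₀ T := by
  classical
  obtain ⟨T, ⟨hTne, hT2, hT3⟩, hviolT⟩ := hviol
  have hcard2 : ∀ e ∈ T, 2 ≤ (e ∩ e₀).card := by
    intro e he
    calc 2 ≤ ((e₀ ∩ e) \ (T.erase e).biUnion (fun j => e₀ ∩ j)).card := hT3 e he
      _ ≤ (e₀ ∩ e).card := card_le_card sdiff_subset
      _ = (e ∩ e₀).card := by rw [inter_comm]
  have hrep : ∀ e ∈ T, ∃ e' ∈ Ee₀, e' ∩ e₀ = e ∩ e₀ := by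
    intro e he
    exact hexists (e ∩ e₀) inter_subset_right (hcard2 e he)
      ⟨e, (hT2 e he).1, (hT2 e he).2.1, rfl⟩
  choose φ hφmem hφinter using hrep
  set ψ : Finset α → Finset α := fun e => if h : e ∈ T then φ e h else e with hψ
  have hψmem : ∀ e ∈ T, ψ e ∈ Ee₀ := by
    intro e he; simp only [hψ, dif_pos he]; exact hφmem e he
  have hψinter : ∀ e ∈ T, ψ e ∩ e₀ = e ∩ e₀ := by
    intro e he; simp only [hψ, dif_pos he]; exact hφinter e he
  -- distinct elements of T have distinct intersections with e₀
  have hT_inter_inj : ∀ e ∈ T, ∀ e' ∈ T, e ∩ e₀ = e' ∩ e₀ → e = e' := by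
    intro e he e' he' hinter
    by_contra hne
    have he'er : e' ∈ T.erase e := mem_erase.mpr ⟨fun h => hne h.symm, he'⟩
    have : (e₀ ∩ e) \ (T.erase e).biUnion (fun j => e₀ ∩ j) = ∅ := by
      apply eq_empty_of_forall_notMem
      intro v hv
      rw [mem_sdiff, mem_biUnion] at hv
      exact hv.2 ⟨e', he'er, by
        rw [inter_comm] at hv ⊢
        rw [← hinter]; exact hv.1⟩
    have h4 := hT3 e he
    rw [this] at h4
    simp at h4
  have hψinj : ∀ e ∈ T, ∀ e' ∈ T, ψ e = ψ e' → e = e' := by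
    intro e he e' he' h
    apply hT_inter_inj e he e' he'
    rw [← hψinter e he, ← hψinter e' he', h]
  set T' : Finset (Finset α) := T.image ψ with hT'
  have hψmem' : ∀ e' ∈ T', ∃ e ∈ T, ψ e = e' := by
    intro e' he'; simpa [hT'] using he'
  -- intersections with e₀ preserved
  have hbi : ∀ v ∈ e₀, (v ∈ T'.biUnion id ↔ v ∈ T.biUnion id) := by
    intro v hv
    simp only [mem_biUnion, id]
    constructor
    · rintro ⟨e', he', hve'⟩
      obtain ⟨e, he, rfl⟩ := hψmem' e' he'
      refine ⟨e, he, ?_⟩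
      have : v ∈ ψ e ∩ e₀ := mem_inter.mpr ⟨hve', hv⟩
      rw [hψinter e he] at this
      exact (mem_inter.mp this).1
    · rintro ⟨e, he, hve⟩
      refine ⟨ψ e, mem_image_of_mem _ he, ?_⟩
      have : v ∈ e ∩ e₀ := mem_inter.mpr ⟨hve, hv⟩
      rw [← hψinter e he] at this
      exact (mem_inter.mp this).1
  have hsdiff : e₀ \ T'.biUnion id = e₀ \ T.biUnion id := by
    ext v
    simp only [mem_sdiff]
    constructor
    · rintro ⟨h1, h2⟩; exact ⟨h1, fun h => h2 ((hbi v h1).mpr h)⟩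
    · rintro ⟨h1, h2⟩; exact ⟨h1, fun h => h2 ((hbi v h1).mp h)⟩
  have hcard' : T'.card = T.card := card_image_of_injOn hψinj
  -- γ-sets preserved
  have hgamma : ∀ i ∈ T,
      (e₀ ∩ ψ i) \ (T'.erase (ψ i)).biUnion (fun j => e₀ ∩ j)
        = (e₀ ∩ i) \ (T.erase i).biUnion (fun j => e₀ ∩ j) := by
    intro i hi
    have h1 : e₀ ∩ ψ i = e₀ ∩ i := by
      rw [inter_comm, hψinter i hi, inter_comm]
    rw [h1]
    ext v
    simp only [mem_sdiff, mem_biUnion, mem_erase]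
    constructor
    · rintro ⟨hv, h2⟩
      refine ⟨hv, ?_⟩
      rintro ⟨j, ⟨hjne, hj⟩, hvj⟩
      apply h2
      refine ⟨ψ j, ⟨fun h => hjne (hψinj j hj i hi h), mem_image_of_mem _ hj⟩, ?_⟩
      rw [inter_comm, hψinter j hj, inter_comm]; exact hvj
    · rintro ⟨hv, h2⟩
      refine ⟨hv, ?_⟩
      rintro ⟨j', ⟨hjne, hj'⟩, hvj'⟩
      obtain ⟨j, hj, rfl⟩ := hψmem' j' hj'
      apply h2
      refine ⟨j, ⟨fun h => hjne (by rw [h]), hj⟩, ?_⟩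
      rw [inter_comm, ← hψinter j hj, inter_comm]; exact hvj'
  refine ⟨T', ⟨hTne.image ψ, ?_, ?_⟩, ?_, ?_⟩
  · intro e' he'
    obtain ⟨e, he, rfl⟩ := hψmem' e' he'
    refine ⟨(hsub _ (hψmem e he)).1, (hsub _ (hψmem e he)).2, ?_⟩
    have h2 := hcard2 e he
    rw [← hψinter e he] at h2
    exact card_pos.mp (by omega)
  · intro i' hi'
    obtain ⟨i, hi, rfl⟩ := hψmem' i' hi'
    rw [hgamma i hi]
    exact hT3 i hi
  · intro e' he'
    obtain ⟨e, he, rfl⟩ := hψmem' e' he'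
    exact hψmem e he
  · unfold ExtFlowerIneq at hviolT ⊢
    rw [hsdiff, hcard']
    intro hle
    apply hviolT
    have hsum : (∑ e ∈ T, z e) ≤ ∑ e' ∈ T', z e' := by
      rw [hT', Finset.sum_image hψinj]
      apply Finset.sum_le_sum
      intro e he
      exact hmax (ψ e) (hψmem e he) e (hT2 e he).1 (hT2 e he).2.1 (hψinter e he).symm
    linarith
end

section
/- Let G=(V,E) be a hypergraph, let e', e'' be two distinct edges of G, and let ẽ be a set with |ẽ| ≥ 2, ẽ ⊆ e' ∩ e'', and ẽ ≠ e''. Then the inequality ∑_{v ∈ e'' \ ẽ} z_v + z_{e'} − z_{e''} ≤ |e'' \ ẽ| is not valid for the standard linearization MP^LP_G: the point z̃ defined by z̃_v = 1 for v ∈ e'' \ ẽ, z̃_v = 1/2 for v ∈ (e' \ e'') ∪ ẽ, z̃_v = 0 for all remaining nodes, z̃_{e'} = 1/2, z̃_{e''} = 0, z̃_e = 1 for all e ∈ E with e ⊆ e'' \ ẽ, z̃_e = 0 for all e ∈ E with e ⊄ e' ∪ e'', and z̃_e = 1/2 for all remaining edges, belongs to MP^LP_G and violates this inequality. -/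
open Finset

/-- the inequality `∑_{v ∈ e''\ẽ} z_v + z_{e'} - z_{e''} ≤ |e''\ẽ|` is not
valid for `MP^LP_G`: the indicated point belongs to `MP^LP_G` and violates it. -/
theorem flower_like_ineq_not_valid_for_stdLin {α : Type*} [DecidableEq α]
    (G : FinHypergraph α) (e' e'' et : Finset α)
    (he' : e' ∈ G.E) (he'' : e'' ∈ G.E) (hne : e' ≠ e'')
    (hcard : 2 ≤ et.card) (hsub : et ⊆ e' ∩ e'') (hnee : et ≠ e'')
    (zt : Finset α → ℝ)
    (hzt : zt = fun s =>
      if s = e' then 1/2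
      else if s = e'' then 0
      else if s.card = 1 then
        (if s ⊆ e'' \ et then 1 else if s ⊆ (e' \ e'') ∪ et then 1/2 else 0)
      else if s ⊆ e'' \ et then 1
      else if s ⊆ e' ∪ e'' then 1/2
      else 0) :
    StdLin G zt ∧
    ¬ ((∑ v ∈ e'' \ et, zt {v}) + zt e' - zt e'' ≤ ((e'' \ et).card : ℝ)) ∧
    ¬ ∀ z : Finset α → ℝ, StdLin G z →
        (∑ v ∈ e'' \ et, z {v}) + z e' - z e'' ≤ ((e'' \ et).card : ℝ) := by
  have hc2' := G.edge_card e' he'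
  have hc2'' := G.edge_card e'' he''
  have hetne : et.Nonempty := Finset.card_pos.mp (by omega)
  have hsub' : et ⊆ e' := hsub.trans Finset.inter_subset_left
  have hsub'' : et ⊆ e'' := hsub.trans Finset.inter_subset_right
  -- node values
  have hnode : ∀ v : α, zt {v} =
      if v ∈ e'' \ et then 1 else if v ∈ (e' \ e'') ∪ et then 1/2 else 0 := by
    intro v
    have h1 : ({v} : Finset α) ≠ e' := by
      intro h; rw [← h] at hc2'; simp at hc2'
    have h2 : ({v} : Finset α) ≠ e'' := by
      intro h; rw [← h] at hc2''; simp at hc2''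
    simp [hzt, h1, h2, Finset.singleton_subset_iff]
  have hnode_le1 : ∀ v : α, zt {v} ≤ 1 := by
    intro v; rw [hnode]; split_ifs <;> norm_num
  have hnode_nonneg : ∀ v : α, 0 ≤ zt {v} := by
    intro v; rw [hnode]; split_ifs <;> norm_num
  have hval1 : ∀ v ∈ e'' \ et, zt {v} = 1 := by
    intro v hv; rw [hnode, if_pos hv]
  have hvalhalf : ∀ v ∈ et, zt {v} = 1/2 := by
    intro v hv
    rw [hnode, if_neg (by simp [Finset.mem_sdiff, hv]),
      if_pos (Finset.mem_union_right _ hv)]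
  have hval0 : ∀ v : α, v ∉ e' ∪ e'' → zt {v} = 0 := by
    intro v hv
    simp only [Finset.mem_union, not_or] at hv
    rw [hnode, if_neg (by simp [Finset.mem_sdiff]; tauto),
      if_neg (by simp [Finset.mem_union, Finset.mem_sdiff]; exact ⟨by tauto, fun h => hv.2 (hsub'' h)⟩)]
  have hhalf : ∀ v ∈ e' ∪ e'', (1/2 : ℝ) ≤ zt {v} := by
    intro v hv
    rw [hnode]
    split_ifs with h1 h2
    · norm_num
    · exact le_refl _
    · exfalso
      simp only [Finset.mem_union, Finset.mem_sdiff] at hv h1 h2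
      tauto
  have hsum_le : ∀ s : Finset α, ∑ v ∈ s, zt {v} ≤ (s.card : ℝ) := by
    intro s
    calc ∑ v ∈ s, zt {v} ≤ ∑ _v ∈ s, (1 : ℝ) :=
          Finset.sum_le_sum fun v _ => hnode_le1 v
      _ = s.card := by simp
  have hsum_erase : ∀ s : Finset α, ∀ v ∈ s,
      ∑ u ∈ s, zt {u} ≤ (s.card : ℝ) - 1 + zt {v} := by
    intro s v hv
    have h2 : ∑ u ∈ s, zt {u} = zt {v} + ∑ u ∈ s.erase v, zt {u} :=
      (Finset.add_sum_erase _ _ hv).symm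
    have h3 := hsum_le (s.erase v)
    have h1 : 1 ≤ s.card := Finset.card_pos.mpr ⟨v, hv⟩
    have hc : ((s.erase v).card : ℝ) = (s.card : ℝ) - 1 := by
      rw [Finset.card_erase_of_mem hv, Nat.cast_sub h1, Nat.cast_one]
    linarith
  have hsum_erase2 : ∀ s : Finset α, ∀ u ∈ s, ∀ w ∈ s, u ≠ w →
      ∑ x ∈ s, zt {x} ≤ (s.card : ℝ) - 2 + zt {u} + zt {w} := by
    intro s u hu w hw hne2
    have hw' : w ∈ s.erase u := Finset.mem_erase.mpr ⟨hne2.symm, hw⟩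
    have h1 := hsum_erase (s.erase u) w hw'
    have h2 : ∑ x ∈ s, zt {x} = zt {u} + ∑ x ∈ s.erase u, zt {x} :=
      (Finset.add_sum_erase _ _ hu).symm
    have h0 : 1 ≤ s.card := Finset.card_pos.mpr ⟨u, hu⟩
    have hc : ((s.erase u).card : ℝ) = (s.card : ℝ) - 1 := by
      rw [Finset.card_erase_of_mem hu, Nat.cast_sub h0, Nat.cast_one]
    linarith
  -- values of the two special edges
  have hze' : zt e' = 1/2 := by simp [hzt]
  have hze'' : zt e'' = 0 := by
    rw [hzt]; simp [Ne.symm hne]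
  have hedge : ∀ e : Finset α, e ∈ G.E → e ≠ e' → e ≠ e'' →
      zt e = if e ⊆ e'' \ et then 1 else if e ⊆ e' ∪ e'' then 1/2 else 0 := by
    intro e heE h1 h2
    have hc : e.card ≠ 1 := by have := G.edge_card e heE; omega
    simp [hzt, h1, h2, hc]
  have hstd : StdLin G zt := by
    refine ⟨fun v _ => hnode_le1 v, fun e heE => ?_⟩
    by_cases h1 : e = e'
    · subst h1
      obtain ⟨v0, hv0⟩ := hetne
      have hv0' : v0 ∈ e := hsub' hv0
      have hs := hsum_erase e v0 hv0'
      rw [hvalhalf v0 hv0] at hs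
      refine ⟨by rw [hze']; norm_num, by rw [hze']; linarith, fun v hv => ?_⟩
      rw [hze']
      exact hhalf v (Finset.mem_union_left _ hv)
    by_cases h2 : e = e''
    · subst h2
      obtain ⟨u, hu, w, hw, huw⟩ := Finset.one_lt_card.mp (show 1 < et.card by omega)
      have hs := hsum_erase2 e u (hsub'' hu) w (hsub'' hw) huw
      rw [hvalhalf u hu, hvalhalf w hw] at hs
      exact ⟨by rw [hze''], by rw [hze'']; linarith, fun v hv => by
        rw [hze'']; exact hnode_nonneg v⟩
    rw [hedge e heE h1 h2]
    by_cases hA : e ⊆ e'' \ et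
    · rw [if_pos hA]
      have hsum1 : ∑ v ∈ e, zt {v} = (e.card : ℝ) := by
        rw [Finset.sum_congr rfl fun v hv => hval1 v (hA hv)]; simp
      exact ⟨by norm_num, by rw [hsum1]; linarith, fun v hv => by
        rw [hval1 v (hA hv)]⟩
    rw [if_neg hA]
    by_cases hB : e ⊆ e' ∪ e''
    · rw [if_pos hB]
      obtain ⟨v0, hv0, hv0'⟩ := Finset.not_subset.mp hA
      have hv0half : zt {v0} = 1/2 := by
        have hv0u := hB hv0
        rw [hnode, if_neg hv0']
        rw [if_pos ?_]
        simp only [Finset.mem_union, Finset.mem_sdiff] at hv0u hv0' ⊢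
        tauto
      have hs := hsum_erase e v0 hv0
      rw [hv0half] at hs
      refine ⟨by norm_num, by linarith, fun v hv => hhalf v (hB hv)⟩
    · rw [if_neg hB]
      obtain ⟨v0, hv0, hv0'⟩ := Finset.not_subset.mp hB
      have hs := hsum_erase e v0 hv0
      rw [hval0 v0 hv0'] at hs
      exact ⟨le_refl _, by linarith, fun v hv => hnode_nonneg v⟩
  have hsumE : ∑ v ∈ e'' \ et, zt {v} = ((e'' \ et).card : ℝ) := by
    rw [Finset.sum_congr rfl fun v hv => hval1 v hv]; simp
  have hviol : ¬ ((∑ v ∈ e'' \ et, zt {v}) + zt e' - zt e'' ≤ ((e'' \ et).card : ℝ)) := by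
    rw [hsumE, hze', hze'']
    intro h; linarith
  exact ⟨hstd, hviol, fun H => hviol (H zt hstd)⟩
end

section
/- Let G=(V,E) be the hypergraph with V = {1,2,3,4} and E = {{1,2,3},{2,3,4},{1,3,4}}. The maximum of −z_{{1,2,3}} + z_{{2,3,4}} + z_{{1,3,4}} over the flower relaxation MP^F_G equals 1, which coincides with the maximum of −x_1x_2x_3 + x_2x_3x_4 + x_1x_3x_4 over x ∈ {0,1}^4. -/
open Finset

def G15 : FinHypergraph ℕ where
  V := {1,2,3,4}
  E := {{1,2,3},{2,3,4},{1,3,4}}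
  edge_sub := by decide
  edge_card := by decide

lemma subset_pair_cases {α : Type*} [DecidableEq α] {s : Finset α} {a b : α} (h : s ⊆ {a,b}) :
    s = ∅ ∨ s = {a} ∨ s = {b} ∨ s = {a,b} := by
  by_cases ha : a ∈ s <;> by_cases hb : b ∈ s
  · right; right; right
    refine subset_antisymm h ?_
    intro x hx; simp only [mem_insert, mem_singleton] at hx
    rcases hx with rfl | rfl <;> assumption
  · right; left
    refine subset_antisymm ?_ (by simpa)
    intro x hx
    have := h hx; simp only [mem_insert, mem_singleton] at this ⊢
    rcases this with rfl | rfl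
    · rfl
    · exact absurd hx hb
  · right; right; left
    refine subset_antisymm ?_ (by simpa)
    intro x hx
    have := h hx; simp only [mem_insert, mem_singleton] at this ⊢
    rcases this with rfl | rfl
    · exact absurd hx ha
    · rfl
  · left
    ext x; simp only [notMem_empty, iff_false]
    intro hx
    have := h hx; simp only [mem_insert, mem_singleton] at this
    rcases this with rfl | rfl <;> [exact ha hx; exact hb hx]


noncomputable def zEx : Finset ℕ → ℝ :=
  fun s => if s = {2} ∨ s = {3} ∨ s = {4} ∨ s = ({2,3,4} : Finset ℕ) then 1 else 0

lemma zEx1 : zEx {1} = 0 := by simp only [zEx]; rw [if_neg (by decide)]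
lemma zEx2 : zEx {2} = 1 := by simp only [zEx]; rw [if_pos (by decide)]
lemma zEx3 : zEx {3} = 1 := by simp only [zEx]; rw [if_pos (by decide)]
lemma zEx4 : zEx {4} = 1 := by simp only [zEx]; rw [if_pos (by decide)]
lemma zEx123 : zEx {1,2,3} = 0 := by simp only [zEx]; rw [if_neg (by decide)]
lemma zEx234 : zEx {2,3,4} = 1 := by simp only [zEx]; rw [if_pos (by decide)]
lemma zEx134 : zEx {1,3,4} = 0 := by simp only [zEx]; rw [if_neg (by decide)]

lemma sum3 (z : Finset ℕ → ℝ) (a b c : ℕ) (hab : a ≠ b) (hac : a ≠ c) (hbc : b ≠ c) :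
    ∑ v ∈ ({a,b,c} : Finset ℕ), z {v} = z {a} + z {b} + z {c} := by
  rw [show ({a,b,c} : Finset ℕ) = insert a (insert b {c}) from rfl,
    sum_insert (by simp [hab, hac]), sum_insert (by simp [hbc]), sum_singleton, add_assoc]

lemma zEx_MPF : MPF G15 zEx := by
  constructor
  · constructor
    · intro v hv
      have : v = 1 ∨ v = 2 ∨ v = 3 ∨ v = 4 := by simpa [G15] using hv
      rcases this with rfl | rfl | rfl | rfl <;>
        simp only [zEx1, zEx2, zEx3, zEx4] <;> norm_num
    · intro e he
      have : e = {1,2,3} ∨ e = {2,3,4} ∨ e = {1,3,4} := by simpa [G15] using he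
      rcases this with rfl | rfl | rfl
      · refine ⟨by rw [zEx123], ?_, ?_⟩
        · rw [sum3 zEx 1 2 3 (by decide) (by decide) (by decide), zEx1, zEx2, zEx3, zEx123]
          norm_num [show ({1,2,3} : Finset ℕ).card = 3 from rfl]
        · intro v hv
          have : v = 1 ∨ v = 2 ∨ v = 3 := by simpa using hv
          rcases this with rfl | rfl | rfl <;>
            simp only [zEx1, zEx2, zEx3, zEx123] <;> norm_num
      · refine ⟨by rw [zEx234]; norm_num, ?_, ?_⟩
        · rw [sum3 zEx 2 3 4 (by decide) (by decide) (by decide), zEx2, zEx3, zEx4, zEx234]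
          norm_num [show ({2,3,4} : Finset ℕ).card = 3 from rfl]
        · intro v hv
          have : v = 2 ∨ v = 3 ∨ v = 4 := by simpa using hv
          rcases this with rfl | rfl | rfl <;>
            simp only [zEx2, zEx3, zEx4, zEx234] <;> norm_num
      · refine ⟨by rw [zEx134], ?_, ?_⟩
        · rw [sum3 zEx 1 3 4 (by decide) (by decide) (by decide), zEx1, zEx3, zEx4, zEx134]
          norm_num [show ({1,3,4} : Finset ℕ).card = 3 from rfl]
        · intro v hv
          have : v = 1 ∨ v = 3 ∨ v = 4 := by simpa using hv
          rcases this with rfl | rfl | rfl <;>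
            simp only [zEx1, zEx3, zEx4, zEx134] <;> norm_num
  · intro e₀ he₀ T hT
    obtain ⟨hTne, hTmem, hTpair⟩ := hT
    have he₀' : e₀ = {1,2,3} ∨ e₀ = {2,3,4} ∨ e₀ = {1,3,4} := by simpa [G15] using he₀
    rcases he₀' with rfl | rfl | rfl
    · have hsub : T ⊆ {({2,3,4} : Finset ℕ), {1,3,4}} := by
        intro e he
        obtain ⟨h1, h2, _⟩ := hTmem e he
        have : e = {1,2,3} ∨ e = {2,3,4} ∨ e = {1,3,4} := by simpa [G15] using h1
        rcases this with rfl | rfl | rfl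
        · exact absurd rfl h2
        · exact mem_insert_self _ _
        · exact mem_insert_of_mem (mem_singleton_self _)
      rcases subset_pair_cases hsub with rfl | rfl | rfl | rfl
      · exact absurd hTne (by simp)
      · unfold ExtFlowerIneq
        rw [show (({1,2,3} : Finset ℕ) \ ({({2,3,4} : Finset ℕ)} : Finset (Finset ℕ)).biUnion id) = {1} from by decide]
        rw [sum_singleton, sum_singleton, zEx1, zEx234, zEx123]
        norm_num
      · unfold ExtFlowerIneq
        rw [show (({1,2,3} : Finset ℕ) \ ({({1,3,4} : Finset ℕ)} : Finset (Finset ℕ)).biUnion id) = {2} from by decide]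
        rw [sum_singleton, sum_singleton, zEx2, zEx134, zEx123]
        norm_num
      · exact absurd (hTpair {2,3,4} (by decide) {1,3,4} (by decide) (by decide)) (by decide)
    · have hsub : T ⊆ {({1,2,3} : Finset ℕ), {1,3,4}} := by
        intro e he
        obtain ⟨h1, h2, _⟩ := hTmem e he
        have : e = {1,2,3} ∨ e = {2,3,4} ∨ e = {1,3,4} := by simpa [G15] using h1
        rcases this with rfl | rfl | rfl
        · exact mem_insert_self _ _
        · exact absurd rfl h2
        · exact mem_insert_of_mem (mem_singleton_self _)
      rcases subset_pair_cases hsub with rfl | rfl | rfl | rfl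
      · exact absurd hTne (by simp)
      · unfold ExtFlowerIneq
        rw [show (({2,3,4} : Finset ℕ) \ ({({1,2,3} : Finset ℕ)} : Finset (Finset ℕ)).biUnion id) = {4} from by decide]
        rw [sum_singleton, sum_singleton, zEx4, zEx123, zEx234]
        norm_num
      · unfold ExtFlowerIneq
        rw [show (({2,3,4} : Finset ℕ) \ ({({1,3,4} : Finset ℕ)} : Finset (Finset ℕ)).biUnion id) = {2} from by decide]
        rw [sum_singleton, sum_singleton, zEx2, zEx134, zEx234]
        norm_num
      · exact absurd (hTpair {1,2,3} (by decide) {1,3,4} (by decide) (by decide)) (by decide)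
    · have hsub : T ⊆ {({1,2,3} : Finset ℕ), {2,3,4}} := by
        intro e he
        obtain ⟨h1, h2, _⟩ := hTmem e he
        have : e = {1,2,3} ∨ e = {2,3,4} ∨ e = {1,3,4} := by simpa [G15] using h1
        rcases this with rfl | rfl | rfl
        · exact mem_insert_self _ _
        · exact mem_insert_of_mem (mem_singleton_self _)
        · exact absurd rfl h2
      rcases subset_pair_cases hsub with rfl | rfl | rfl | rfl
      · exact absurd hTne (by simp)
      · unfold ExtFlowerIneq
        rw [show (({1,3,4} : Finset ℕ) \ ({({1,2,3} : Finset ℕ)} : Finset (Finset ℕ)).biUnion id) = {4} from by decide]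
        rw [sum_singleton, sum_singleton, zEx4, zEx123, zEx134]
        norm_num
      · unfold ExtFlowerIneq
        rw [show (({1,3,4} : Finset ℕ) \ ({({2,3,4} : Finset ℕ)} : Finset (Finset ℕ)).biUnion id) = {1} from by decide]
        rw [sum_singleton, sum_singleton, zEx1, zEx234, zEx134]
        norm_num
      · exact absurd (hTpair {1,2,3} (by decide) {2,3,4} (by decide) (by decide)) (by decide)

/-- the maximum of `-z_{123} + z_{234} + z_{134}` over the flower relaxation
of the example equals `1`, which coincides with the maximum of
`-x₁x₂x₃ + x₂x₃x₄ + x₁x₃x₄` over `x ∈ {0,1}⁴`. -/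
theorem flower_relaxation_example_max :
    IsGreatest {c : ℝ | ∃ z : Finset ℕ → ℝ, MPF G15 z ∧
      c = -z {1,2,3} + z {2,3,4} + z {1,3,4}} 1 ∧
    IsGreatest {c : ℝ | ∃ x : Fin 4 → ℝ, (∀ i, x i = 0 ∨ x i = 1) ∧
      c = -(x 0 * x 1 * x 2) + x 1 * x 2 * x 3 + x 0 * x 2 * x 3} 1 := by
  constructor
  · constructor
    · exact ⟨zEx, zEx_MPF, by rw [zEx123, zEx234, zEx134]; norm_num⟩
    · rintro c ⟨z, ⟨hStd, hFl⟩, rfl⟩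
      have hvalid : ValidFlowerNeighbors G15 {1,2,3} {({2,3,4} : Finset ℕ)} := by unfold ValidFlowerNeighbors; decide
      have h1 := hFl {1,2,3} (by decide) {({2,3,4} : Finset ℕ)} hvalid
      unfold ExtFlowerIneq at h1
      rw [show (({1,2,3} : Finset ℕ) \ ({({2,3,4} : Finset ℕ)} : Finset (Finset ℕ)).biUnion id) = {1} from by decide,
        sum_singleton, sum_singleton] at h1
      simp only [card_singleton] at h1
      have h2 : z {1,3,4} ≤ z {1} :=
        (hStd.2 {1,3,4} (by decide)).2.2 1 (by decide)
      push_cast at h1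
      linarith
  · constructor
    · refine ⟨![0,1,1,1], ?_, by simp⟩
      intro i; fin_cases i <;> simp
    · rintro c ⟨x, hx, rfl⟩
      rcases hx 0 with h0 | h0 <;> rcases hx 1 with h1 | h1 <;>
        rcases hx 2 with h2 | h2 <;> rcases hx 3 with h3 | h3 <;>
        rw [h0, h1, h2, h3] <;> norm_num
end
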